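/- The depth of a complete graph on k vertices (viewed as a cograph) is ⌈log₂ k⌉. -/

import Mathlib

/-- Cotree construction trees: a single vertex, or the disjoint union / join of two cographs. -/
inductive Cotree : Type where
  | leaf : Cotree
  | union : Cotree → Cotree → Cotree
  | join : Cotree → Cotree → Cotree

/-- The vertex type of the cograph described by a cotree. -/
def Cotree.verts : Cotree → Type
  | .leaf => Unit
  | .union t₁ t₂ => t₁.verts ⊕ t₂.verts
  | .join t₁ t₂ => t₁.verts ⊕ t₂.verts

/-- Disjoint union of two simple graphs. -/
def sumGraph {α β : Type} (G : SimpleGraph α) (H : SimpleGraph β) : SimpleGraph (α ⊕ β) where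
  Adj x y := match x, y with
    | .inl a, .inl b => G.Adj a b
    | .inr a, .inr b => H.Adj a b
    | _, _ => False
  symm := by
    constructor
    rintro (a | a) (b | b) h
    · exact G.adj_symm h
    · exact h.elim
    · exact h.elim
    · exact H.adj_symm h
  loopless := by
    constructor
    rintro (a | a) h
    · exact G.loopless.irrefl a h
    · exact H.loopless.irrefl a h

/-- Join of two simple graphs: all cross edges are present. -/
def joinGraph {α β : Type} (G : SimpleGraph α) (H : SimpleGraph β) : SimpleGraph (α ⊕ β) where
  Adj x y := match x, y with
    | .inl a, .inl b => G.Adj a b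
    | .inr a, .inr b => H.Adj a b
    | .inl _, .inr _ => True
    | .inr _, .inl _ => True
  symm := by
    constructor
    rintro (a | a) (b | b) h
    · exact G.adj_symm h
    · trivial
    · trivial
    · exact H.adj_symm h
  loopless := by
    constructor
    rintro (a | a) h
    · exact G.loopless.irrefl a h
    · exact H.loopless.irrefl a h

/-- The cograph described by a cotree. -/
def Cotree.graph : (t : Cotree) → SimpleGraph t.verts
  | .leaf => ⊥
  | .union t₁ t₂ => sumGraph t₁.graph t₂.graph
  | .join t₁ t₂ => joinGraph t₁.graph t₂.graph

instance Cotree.instFintypeVerts : (t : Cotree) → Fintype t.verts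
  | .leaf => inferInstanceAs (Fintype Unit)
  | .union t₁ t₂ =>
      letI := instFintypeVerts t₁; letI := instFintypeVerts t₂
      inferInstanceAs (Fintype (t₁.verts ⊕ t₂.verts))
  | .join t₁ t₂ =>
      letI := instFintypeVerts t₁; letI := instFintypeVerts t₂
      inferInstanceAs (Fintype (t₁.verts ⊕ t₂.verts))

/-- The depth of a cotree: a single vertex has depth 0, and a union or join of two cographs
has depth one more than the maximum of their depths. -/
def Cotree.depth : Cotree → ℕ
  | .leaf => 0
  | .union t₁ t₂ => max t₁.depth t₂.depth + 1
  | .join t₁ t₂ => max t₁.depth t₂.depth + 1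


lemma Cotree.verts_nonempty : (t : Cotree) → Nonempty t.verts
  | .leaf => ⟨()⟩
  | .union t₁ t₂ => (verts_nonempty t₁).elim fun a => ⟨.inl a⟩
  | .join t₁ t₂ => (verts_nonempty t₁).elim fun a => ⟨.inl a⟩

lemma Cotree.card_sum (t₁ t₂ : Cotree) :
    Fintype.card (Cotree.join t₁ t₂).verts = Fintype.card t₁.verts + Fintype.card t₂.verts :=
  Fintype.card_sum

lemma Cotree.card_sum' (t₁ t₂ : Cotree) :
    Fintype.card (Cotree.union t₁ t₂).verts = Fintype.card t₁.verts + Fintype.card t₂.verts :=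
  Fintype.card_sum

lemma Cotree.card_le_pow_depth (t : Cotree) (h : ∀ x y, t.graph.Adj x y ↔ x ≠ y) :
    Fintype.card t.verts ≤ 2 ^ t.depth := by
  induction t with
  | leaf => simp [Cotree.depth, Cotree.verts]; exact Fintype.card_le_one_iff.2 fun _ _ => rfl
  | union t₁ t₂ ih₁ ih₂ =>
    obtain ⟨a⟩ := t₁.verts_nonempty
    obtain ⟨b⟩ := t₂.verts_nonempty
    exact ((h (.inl a) (.inr b)).2 (by exact Sum.inl_ne_inr) : False).elim
  | join t₁ t₂ ih₁ ih₂ =>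
    have h₁ : ∀ x y, t₁.graph.Adj x y ↔ x ≠ y := fun x y =>
      ⟨fun hadj => t₁.graph.ne_of_adj hadj,
       fun hxy => (h (.inl x) (.inl y)).2 fun c => hxy (Sum.inl.inj c)⟩
    have h₂ : ∀ x y, t₂.graph.Adj x y ↔ x ≠ y := fun x y =>
      ⟨fun hadj => t₂.graph.ne_of_adj hadj,
       fun hxy => (h (.inr x) (.inr y)).2 fun c => hxy (Sum.inr.inj c)⟩
    have c1 := ih₁ h₁
    have c2 := ih₂ h₂
    rw [Cotree.card_sum]
    calc Fintype.card t₁.verts + Fintype.card t₂.verts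
        ≤ 2 ^ t₁.depth + 2 ^ t₂.depth := Nat.add_le_add c1 c2
      _ ≤ 2 ^ (max t₁.depth t₂.depth) + 2 ^ (max t₁.depth t₂.depth) := by
          gcongr <;> simp [Nat.pow_le_pow_right, le_max_left, le_max_right]
      _ = 2 ^ (max t₁.depth t₂.depth + 1) := by ring
      _ = 2 ^ (Cotree.join t₁ t₂).depth := rfl

/-- Build a cotree for the complete graph on `n` vertices. -/
def buildTree : ℕ → Cotree
  | 0 => .leaf
  | 1 => .leaf
  | (n+2) => .join (buildTree ((n+3)/2)) (buildTree ((n+2)/2))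
  decreasing_by all_goals omega

lemma buildTree_card : ∀ n, 1 ≤ n → Fintype.card (buildTree n).verts = n
  | 0, h => by omega
  | 1, _ => by simp [buildTree, Cotree.verts]
  | (n+2), _ => by
    rw [buildTree, Cotree.card_sum,
      buildTree_card ((n+3)/2) (by omega), buildTree_card ((n+2)/2) (by omega)]
    omega
  decreasing_by all_goals omega

lemma buildTree_complete : ∀ n, 1 ≤ n → ∀ x y, ((buildTree n).graph.Adj x y ↔ x ≠ y)
  | 0, h => by omega
  | 1, _ => by
    have e : buildTree 1 = Cotree.leaf := by simp [buildTree]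
    rw [e]
    rintro ⟨⟩ ⟨⟩
    simp [Cotree.graph]
    exact ⟨fun h => False.elim h, fun h => (h rfl).elim⟩
  | (n+2), _ => by
    have h₁ := buildTree_complete ((n+3)/2) (by omega)
    have h₂ := buildTree_complete ((n+2)/2) (by omega)
    have e : buildTree (n+2) = .join (buildTree ((n+3)/2)) (buildTree ((n+2)/2)) := by
      rw [buildTree]
    rw [e]
    rintro (x | x) (y | y) <;>
      simp [Cotree.graph, Cotree.verts, joinGraph, h₁, h₂]
  decreasing_by all_goals omega

lemma buildTree_depth : ∀ n, 1 ≤ n → (buildTree n).depth = Nat.clog 2 n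
  | 0, h => by omega
  | 1, _ => by simp [buildTree, Cotree.depth]
  | (n+2), _ => by
    have d₁ := buildTree_depth ((n+3)/2) (by omega)
    have d₂ := buildTree_depth ((n+2)/2) (by omega)
    have hmono : Nat.clog 2 ((n+2)/2) ≤ Nat.clog 2 ((n+3)/2) :=
      Nat.clog_mono_right 2 (by omega)
    have key : Nat.clog 2 (n+2) = Nat.clog 2 ((n+3)/2) + 1 := by
      have := Nat.clog_of_two_le (b := 2) (n := n+2) (by norm_num) (by omega)
      simpa using this
    rw [buildTree]
    show max (buildTree ((n+3)/2)).depth (buildTree ((n+2)/2)).depth + 1 = _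
    rw [d₁, d₂, key, max_eq_left hmono]
  decreasing_by all_goals omega

/-- The minimum depth over all cograph constructions of the complete graph on `k ≥ 1` vertices
equals `⌈log₂ k⌉`. -/
theorem stmt5 (k : ℕ) (hk : 1 ≤ k) :
    IsLeast {d : ℕ | ∃ t : Cotree, t.depth = d ∧
      Nonempty (t.graph ≃g (⊤ : SimpleGraph (Fin k)))} (Nat.clog 2 k) := by
  constructor
  · refine ⟨buildTree k, buildTree_depth k hk, ⟨?_⟩⟩
    have hc : Fintype.card (buildTree k).verts = Fintype.card (Fin k) := by
      rw [buildTree_card k hk, Fintype.card_fin]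
    refine ⟨Fintype.equivOfCardEq hc, ?_⟩
    intro a b
    simp [buildTree_complete k hk]
  · rintro d ⟨t, rfl, ⟨e⟩⟩
    have hcomp : ∀ x y, t.graph.Adj x y ↔ x ≠ y := by
      intro x y
      rw [← e.map_rel_iff]
      simp [SimpleGraph.top_adj]
    have hcard : Fintype.card t.verts = k := by
      rw [Fintype.card_congr e.toEquiv, Fintype.card_fin]
    have := t.card_le_pow_depth hcomp
    rw [hcard] at this
    exact (Nat.clog_le_iff_le_pow (b := 2) (by norm_num)).2 this
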